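/- ∑_{k=1}^∞ 1/(k⁷ (2k² + 2k + 1)(2k² − 2k + 1)) = ζ(7) − 4ζ(3) + 4. -/

import Mathlib

open Filter Topology Finset

lemma key (x : ℂ) (h1 : x ≠ 0) (h2 : 2*x^2+2*x+1 ≠ 0) (h3 : 2*x^2-2*x+1 ≠ 0) :
    1/(x^7*(2*x^2+2*x+1)*(2*x^2-2*x+1)) = 1/x^7 - 4/x^3 - 4/(2*x^2+2*x+1) + 4/(2*x^2-2*x+1) := by
  have h4 : x^10 + x^14*4 ≠ 0 := by
    have e : x^10 + x^14*4 = x^10*((2*x^2+2*x+1)*(2*x^2-2*x+1)) := by ring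
    rw [e]; exact mul_ne_zero (pow_ne_zero _ h1) (mul_ne_zero h2 h3)
  field_simp
  have h2' : x*2*(x+1)+1 ≠ 0 := by convert h2 using 1; ring
  have h3' : x*2*(x-1)+1 ≠ 0 := by convert h3 using 1; ring
  field_simp
  ring

noncomputable def hh (k : ℕ) : ℂ := 4 / (2 * (k : ℂ) ^ 2 + 2 * k + 1)

noncomputable def ff (k : ℕ) : ℂ :=
  (1 : ℂ) / (((k : ℂ) + 1) ^ 7 * (2 * ((k : ℂ) + 1) ^ 2 + 2 * ((k : ℂ) + 1) + 1) *
        (2 * ((k : ℂ) + 1) ^ 2 - 2 * ((k : ℂ) + 1) + 1))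

lemma cast_pos_ne (n : ℕ) (hn : 0 < n) : ((n : ℂ)) ≠ 0 := by exact_mod_cast hn.ne'

lemma quad_ne (k : ℕ) : 2 * (k : ℂ) ^ 2 + 2 * k + 1 ≠ 0 := by
  have : ((2 * k ^ 2 + 2 * k + 1 : ℕ) : ℂ) ≠ 0 := cast_pos_ne _ (by positivity)
  push_cast at this; convert this using 1

lemma x_ne (k : ℕ) : ((k : ℂ) + 1) ≠ 0 := by
  have : (((k + 1 : ℕ)) : ℂ) ≠ 0 := cast_pos_ne _ k.succ_pos
  push_cast at this; exact this

lemma quadp_ne (k : ℕ) : 2 * ((k : ℂ)+1) ^ 2 + 2 * ((k:ℂ)+1) + 1 ≠ 0 := by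
  have := quad_ne (k+1); intro h; apply this; rw [← h]; push_cast; ring

lemma quadm_ne (k : ℕ) : 2 * ((k : ℂ)+1) ^ 2 - 2 * ((k:ℂ)+1) + 1 ≠ 0 := by
  have := quad_ne k; intro h; apply this; rw [← h]; ring

lemma hh_succ (k : ℕ) : hh (k+1) = 4 / (2 * ((k:ℂ)+1)^2 + 2*((k:ℂ)+1) + 1) := by
  unfold hh; push_cast; ring_nf

lemma hh_eq (k : ℕ) : hh k = 4 / (2 * ((k:ℂ)+1)^2 - 2*((k:ℂ)+1) + 1) := by
  unfold hh; congr 1; ring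

lemma ff_eq (k : ℕ) :
    ff k = 1 / ((k:ℂ)+1)^7 - 4 / ((k:ℂ)+1)^3 + (hh k - hh (k+1)) := by
  rw [hh_succ, hh_eq]
  unfold ff
  rw [key _ (x_ne k) (quadp_ne k) (quadm_ne k)]
  ring

lemma real_summable (p : ℕ) (hp : 1 < p) : Summable (fun n : ℕ => 1 / ((n:ℝ)+1) ^ p) := by
  have h := Real.summable_one_div_nat_pow.mpr hp
  have := (summable_nat_add_iff 1).mpr h
  refine this.congr fun n => ?_
  push_cast; ring

lemma cplx_summable (p : ℕ) (hp : 1 < p) : Summable (fun n : ℕ => 1 / ((n:ℂ)+1) ^ p) := by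
  refine Summable.of_norm ((real_summable p hp).congr fun n => ?_)
  rw [norm_div, norm_one, norm_pow]
  rw [show ((n:ℂ)+1) = (((n:ℝ)+1 : ℝ) : ℂ) by push_cast; ring, Complex.norm_real,
    Real.norm_eq_abs, abs_of_pos (by positivity)]

lemma ff_norm (k : ℕ) : ‖ff k‖ = 1 / (((k+1)^7 * (2*(k+1)^2+2*(k+1)+1) * (2*k^2+2*k+1) : ℕ) : ℝ) := by
  have e : ff k = ((1 / (((k+1)^7 * (2*(k+1)^2+2*(k+1)+1) * (2*k^2+2*k+1) : ℕ) : ℝ) : ℝ) : ℂ) := by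
    unfold ff; push_cast; congr 1; ring
  rw [e, Complex.norm_real, Real.norm_eq_abs, abs_of_pos (by positivity)]

lemma ff_summable_norm : Summable (fun k => ‖ff k‖) := by
  refine Summable.of_nonneg_of_le (fun k => norm_nonneg _)
    (fun k => ?_) (real_summable 2 one_lt_two)
  rw [ff_norm]
  apply one_div_le_one_div_of_le (by positivity)
  have hn : (k+1)^2 ≤ (k+1)^7 * (2*(k+1)^2+2*(k+1)+1) * (2*k^2+2*k+1) := by
    calc (k+1)^2 ≤ (k+1)^7 := Nat.pow_le_pow_right k.succ_pos (by norm_num)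
    _ ≤ (k+1)^7 * (2*(k+1)^2+2*(k+1)+1) := Nat.le_mul_of_pos_right _ (by positivity)
    _ ≤ _ := Nat.le_mul_of_pos_right _ (by positivity)
  calc ((k:ℝ)+1)^2 = (((k+1)^2 : ℕ) : ℝ) := by push_cast; ring
  _ ≤ _ := by exact_mod_cast hn

lemma hh_tendsto : Filter.Tendsto hh atTop (nhds 0) := by
  rw [tendsto_zero_iff_norm_tendsto_zero]
  have hb : ∀ n : ℕ, ‖hh n‖ = 4 / (2*(n:ℝ)^2+2*n+1) := by
    intro n
    unfold hh
    rw [show (2 * (n : ℂ) ^ 2 + 2 * n + 1) = (((2*(n:ℝ)^2+2*n+1 : ℝ)) : ℂ) by push_cast; ring]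
    rw [norm_div, Complex.norm_real, Real.norm_eq_abs, abs_of_pos (by positivity)]
    norm_num
  simp only [hb]
  apply squeeze_zero (fun n => by positivity) (g := fun n : ℕ => 4 * (1/((n:ℝ)+1)))
  · intro n
    rw [mul_one_div]
    apply div_le_div_of_nonneg_left (by norm_num) (by positivity)
    nlinarith [sq_nonneg ((n:ℝ))]
  · simpa using tendsto_one_div_add_atTop_nhds_zero_nat.const_mul (4:ℝ)

lemma zeta_shift (k : ℕ) (hk : 1 < k) :
    riemannZeta k = ∑' n : ℕ, 1 / ((n : ℂ) + 1) ^ k := by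
  rw [zeta_eq_tsum_one_div_nat_add_one_cpow (by simp; exact_mod_cast hk)]
  norm_num [← Complex.cpow_natCast]

lemma ff_hasSum : HasSum ff (riemannZeta 7 - 4 * riemannZeta 3 + 4) := by
  rw [hasSum_iff_tendsto_nat_of_summable_norm ff_summable_norm]
  have hpart : ∀ n : ℕ, ∑ k ∈ range n, ff k =
      (∑ k ∈ range n, 1 / ((k:ℂ)+1)^7) - 4 * (∑ k ∈ range n, 1 / ((k:ℂ)+1)^3)
        + (hh 0 - hh n) := by
    intro n
    rw [← Finset.sum_range_sub' hh n, Finset.mul_sum, ← Finset.sum_sub_distrib,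
      ← Finset.sum_add_distrib]
    refine Finset.sum_congr rfl fun k _ => ?_
    rw [ff_eq k]; ring
  simp only [hpart]
  have h0 : hh 0 = 4 := by unfold hh; norm_num
  have h7 : Filter.Tendsto (fun n => ∑ k ∈ range n, (1:ℂ) / ((k:ℂ)+1)^7) atTop
      (nhds (riemannZeta 7)) := by
    have := (cplx_summable 7 (by norm_num)).hasSum.tendsto_sum_nat
    rwa [← zeta_shift 7 (by norm_num), Nat.cast_ofNat] at this
  have h3 : Filter.Tendsto (fun n => ∑ k ∈ range n, (1:ℂ) / ((k:ℂ)+1)^3) atTop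
      (nhds (riemannZeta 3)) := by
    have := (cplx_summable 3 (by norm_num)).hasSum.tendsto_sum_nat
    rwa [← zeta_shift 3 (by norm_num), Nat.cast_ofNat] at this
  have := (h7.sub (h3.const_mul 4)).add ((tendsto_const_nhds (x := hh 0)).sub hh_tendsto)
  rw [sub_zero] at this
  simpa [h0] using this

theorem stmt18 :
    ∑' k : ℕ, (1 : ℂ) / (((k : ℂ) + 1) ^ 7 * (2 * ((k : ℂ) + 1) ^ 2 + 2 * ((k : ℂ) + 1) + 1) *
        (2 * ((k : ℂ) + 1) ^ 2 - 2 * ((k : ℂ) + 1) + 1)) =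
      riemannZeta 7 - 4 * riemannZeta 3 + 4 := by
  exact ff_hasSum.tsum_eq
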